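/- The function d_max(η) = N_t·N_r·[1 − gη/((1+gη)·ln(1+gη))] satisfies 0 < d_max(η) < N_t·N_r for all η > 0, is strictly increasing in η, and tends to N_t·N_r as η → ∞. -/

import Mathlib

open Filter Real

-- basic facts about x ↦ x/((1+x)log(1+x)) for x>0
lemma aux_log_pos {x : ℝ} (hx : 0 < x) : 0 < Real.log (1 + x) :=
  Real.log_pos (by linarith)

lemma aux_log_lt {x : ℝ} (hx : 0 < x) : Real.log (1 + x) < x := by
  have := Real.log_lt_sub_one_of_pos (by linarith : (0:ℝ) < 1 + x) (by linarith)
  linarith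

lemma aux_lt_log {x : ℝ} (hx : 0 < x) : x / (1 + x) < Real.log (1 + x) := by
  have h1 : (0:ℝ) < 1 + x := by linarith
  have h := Real.log_lt_sub_one_of_pos (x := (1+x)⁻¹) (by positivity)
    (by intro h; rw [inv_eq_one] at h; linarith)
  rw [Real.log_inv] at h
  have : (1+x)⁻¹ - 1 = -(x/(1+x)) := by field_simp; ring
  rw [this] at h; linarith

lemma aux_x_lt {x : ℝ} (hx : 0 < x) : x < (1 + x) * Real.log (1 + x) := by
  have h1 : (0:ℝ) < 1 + x := by linarith
  have := aux_lt_log hx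
  calc x = (x / (1+x)) * (1+x) := by field_simp
    _ < Real.log (1+x) * (1+x) := by
        exact mul_lt_mul_of_pos_right this h1
    _ = (1+x) * Real.log (1+x) := mul_comm _ _

lemma aux_hasDeriv {g : ℝ} (hg : 0 < g) {η : ℝ} (hη : 0 < η) :
    HasDerivAt (fun η : ℝ => g * η / ((1 + g * η) * Real.log (1 + g * η)))
      (g * (Real.log (1 + g * η) - g * η) /
        (((1 + g * η) * Real.log (1 + g * η)) ^ 2)) η := by
  have hx : 0 < g * η := mul_pos hg hη
  have h1 : (0:ℝ) < 1 + g * η := by linarith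
  have hL : 0 < Real.log (1 + g * η) := aux_log_pos hx
  have hD : (1 + g * η) * Real.log (1 + g * η) ≠ 0 := by positivity
  have hgη : HasDerivAt (fun η : ℝ => g * η) g η := by
    simpa using (hasDerivAt_id η).const_mul g
  have h2 : HasDerivAt (fun η : ℝ => 1 + g * η) g η := hgη.const_add 1
  have h3 : HasDerivAt (fun η : ℝ => Real.log (1 + g * η)) (g / (1 + g * η)) η :=
    h2.log (ne_of_gt h1)
  have h4 : HasDerivAt (fun η : ℝ => (1 + g * η) * Real.log (1 + g * η))
      (g * Real.log (1 + g * η) + (1 + g * η) * (g / (1 + g * η))) η := h2.mul h3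
  have h5 := hgη.div h4 hD
  refine h5.congr_deriv ?_
  have e : (1 + g * η) * (g / (1 + g * η)) = g := by field_simp
  rw [e]
  ring

theorem dmax_properties (Nt Nr : ℕ) (hNt : 0 < Nt) (hNr : 0 < Nr) (g : ℝ) (hg : 0 < g) :
    (∀ η : ℝ, 0 < η →
        0 < (Nt : ℝ) * Nr * (1 - g * η / ((1 + g * η) * Real.log (1 + g * η))) ∧
        (Nt : ℝ) * Nr * (1 - g * η / ((1 + g * η) * Real.log (1 + g * η))) <
          (Nt : ℝ) * Nr) ∧
    StrictMonoOn
      (fun η : ℝ => (Nt : ℝ) * Nr * (1 - g * η / ((1 + g * η) * Real.log (1 + g * η))))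
      (Set.Ioi 0) ∧
    Tendsto
      (fun η : ℝ => (Nt : ℝ) * Nr * (1 - g * η / ((1 + g * η) * Real.log (1 + g * η))))
      atTop (nhds ((Nt : ℝ) * Nr)) := by
  have hC : (0:ℝ) < (Nt : ℝ) * Nr := by positivity
  -- generic facts for η > 0
  have key : ∀ η : ℝ, 0 < η →
      0 < g * η / ((1 + g * η) * Real.log (1 + g * η)) ∧
      g * η / ((1 + g * η) * Real.log (1 + g * η)) < 1 := by
    intro η hη
    have hx : 0 < g * η := mul_pos hg hη
    have h1 : (0:ℝ) < 1 + g * η := by linarith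
    have hL := aux_log_pos hx
    constructor
    · positivity
    · rw [div_lt_one (by positivity)]
      simpa using aux_x_lt hx
  refine ⟨?_, ?_, ?_⟩
  · intro η hη
    obtain ⟨h0, h1⟩ := key η hη
    constructor
    · have : 0 < 1 - g * η / ((1 + g * η) * Real.log (1 + g * η)) := by linarith
      positivity
    · nlinarith
  · -- strict monotonicity
    apply strictMonoOn_of_deriv_pos (convex_Ioi 0)
    · intro η hη
      have hη : 0 < η := hη
      exact ((((aux_hasDeriv hg hη).const_sub 1).const_mul ((Nt : ℝ) * Nr)).continuousAt).continuousWithinAt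
    · intro η hη
      rw [interior_Ioi] at hη
      have hη : 0 < η := hη
      have hx : 0 < g * η := mul_pos hg hη
      have h1 : (0:ℝ) < 1 + g * η := by linarith
      have hL := aux_log_pos hx
      have hd := ((aux_hasDeriv hg hη).const_sub 1).const_mul ((Nt : ℝ) * Nr)
      rw [hd.deriv]
      have hlt := aux_log_lt hx
      have : 0 < -(g * (Real.log (1 + g * η) - g * η) /
          (((1 + g * η) * Real.log (1 + g * η)) ^ 2)) := by
        rw [neg_pos]
        apply div_neg_of_neg_of_pos
        · nlinarith
        · positivity
      nlinarith
  · -- limit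
    have hq : Tendsto (fun η : ℝ => g * η / ((1 + g * η) * Real.log (1 + g * η)))
        atTop (nhds 0) := by
      have h1 : Tendsto (fun η : ℝ => 1 + g * η) atTop atTop :=
        tendsto_atTop_add_const_left _ 1 (Tendsto.const_mul_atTop hg tendsto_id)
      have h2 : Tendsto (fun η : ℝ => Real.log (1 + g * η)) atTop atTop :=
        Real.tendsto_log_atTop.comp h1
      have h3 : Tendsto (fun η : ℝ => (Real.log (1 + g * η))⁻¹) atTop (nhds 0) :=
        h2.inv_tendsto_atTop
      apply tendsto_of_tendsto_of_tendsto_of_le_of_le' tendsto_const_nhds h3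
      · filter_upwards [eventually_gt_atTop 0] with η hη
        exact le_of_lt (key η hη).1
      · filter_upwards [eventually_gt_atTop 0] with η hη
        have hx : 0 < g * η := mul_pos hg hη
        have h1' : (0:ℝ) < 1 + g * η := by linarith
        have hL := aux_log_pos hx
        have hstep : g * η / ((1 + g * η) * Real.log (1 + g * η)) ≤
            (1 + g * η) / ((1 + g * η) * Real.log (1 + g * η)) := by
          gcongr
          linarith
        have heq : (1 + g * η) / ((1 + g * η) * Real.log (1 + g * η)) =
            (Real.log (1 + g * η))⁻¹ := by
          field_simp
        linarith [hstep, heq ▸ hstep]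
    have h4 : Tendsto (fun η : ℝ => (1:ℝ) - g * η / ((1 + g * η) * Real.log (1 + g * η)))
        atTop (nhds (1 - 0)) := (tendsto_const_nhds (x := (1:ℝ))).sub hq
    have := h4.const_mul ((Nt : ℝ) * Nr)
    simpa using this
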